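/- Let x = (x_1, …, x_n) be a configuration in ℝ^{n−k}. Then the linear map T : Ker(X) → Ker(A(x)) defined by T(v_1, …, v_n) = (−∑_{i=1}^n ‖x_i‖² v_i, v_1, …, v_n) is a linear isomorphism; in particular Ker(A(x)) and Ker(X) are isomorphic. -/

import Mathlib

open scoped RealInnerProductSpace

/-- The Cayley–Menger matrix of a configuration. -/
noncomputable def cayleyMenger {n d : ℕ} (x : Fin n → EuclideanSpace ℝ (Fin d)) :
    Matrix (Fin (n + 1)) (Fin (n + 1)) ℝ :=
  Matrix.of fun i j =>
    Fin.cases (Fin.cases 0 (fun _ => 1) j)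
      (fun i' => Fin.cases 1 (fun j' => dist (x i') (x j') ^ 2) j) i

/-- The configuration matrix of `x : Fin n → ℝ^{n−k}`: the `n × n` matrix whose `j`-th
column is `(1, x_j, 0, …, 0)`. -/
noncomputable def configMatrix {n k : ℕ} (x : Fin n → EuclideanSpace ℝ (Fin (n - k))) :
    Matrix (Fin n) (Fin n) ℝ :=
  Matrix.of fun i j =>
    if (i : ℕ) = 0 then 1
    else if hd : (i : ℕ) - 1 < n - k then x j ⟨(i : ℕ) - 1, hd⟩ else 0

/-- The matrix of the linear map `T : v ↦ (−∑ ‖x_i‖² v_i, v_1, …, v_n)`. -/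
noncomputable def Tmat {n k : ℕ} (x : Fin n → EuclideanSpace ℝ (Fin (n - k))) :
    Matrix (Fin (n + 1)) (Fin n) ℝ :=
  Matrix.of fun i j =>
    Fin.cases (-(‖x j‖ ^ 2)) (fun i' => if i' = j then 1 else 0) i

/-- The linear map `T(v) = (−∑ ‖x_i‖² v_i, v_1, …, v_n)` maps `Ker X`
bijectively onto `Ker A(x)`; in particular `Ker A(x)` and `Ker X` are isomorphic. -/
theorem statement5 {n k : ℕ} (hk1 : 1 ≤ k) (hk2 : k ≤ n - 1)
    (x : Fin n → EuclideanSpace ℝ (Fin (n - k))) (hinj : Function.Injective x) :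
    Set.BijOn (Tmat x).mulVec
      (↑(LinearMap.ker (configMatrix x).mulVecLin) : Set (Fin n → ℝ))
      (↑(LinearMap.ker (cayleyMenger x).mulVecLin) : Set (Fin (n + 1) → ℝ)) ∧
    Nonempty (LinearMap.ker (configMatrix x).mulVecLin ≃ₗ[ℝ]
      LinearMap.ker (cayleyMenger x).mulVecLin) := by
  have hn : 0 < n := by omega
  have apply_sum : ∀ (v : Fin n → ℝ) (c : Fin (n - k)),
      (∑ j, v j • x j) c = ∑ j, v j * x j c := by
    intro v c
    rw [show (∑ j, v j • x j) c = EuclideanSpace.proj (𝕜 := ℝ) c (∑ j, v j • x j) from rfl,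
      map_sum]
    refine Finset.sum_congr rfl fun j _ => ?_
    rw [map_smul]
    rfl
  have zero_apply : ∀ c : Fin (n - k), (0 : EuclideanSpace ℝ (Fin (n - k))) c = 0 :=
    fun _ => rfl
  -- characterization of Ker X
  have kerX : ∀ v : Fin n → ℝ,
      (configMatrix x).mulVec v = 0 ↔ (∑ j, v j = 0) ∧ (∑ j, v j • x j = 0) := by
    intro v
    constructor
    · intro h
      constructor
      · have h0 := congrFun h ⟨0, hn⟩
        simpa [configMatrix, Matrix.mulVec, dotProduct] using h0
      · refine PiLp.ext fun c => ?_
        have hc1 : (c : ℕ) + 1 < n := by have := c.isLt; omega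
        have h1 := congrFun h ⟨(c : ℕ) + 1, hc1⟩
        simp [configMatrix, Matrix.mulVec, dotProduct, c.isLt] at h1
        show (∑ j, v j • x j) c = 0
        rw [apply_sum]
        simpa [mul_comm] using h1
    · rintro ⟨h1, h2⟩
      funext i
      rcases Nat.eq_zero_or_pos (i : ℕ) with hi | hi
      · simpa [configMatrix, Matrix.mulVec, dotProduct, hi] using h1
      · have hi' : (i : ℕ) ≠ 0 := Nat.pos_iff_ne_zero.mp hi
        by_cases hd : (i : ℕ) - 1 < n - k
        · have h3 : (∑ j, v j • x j) ⟨(i : ℕ) - 1, hd⟩ = (0 : EuclideanSpace ℝ (Fin (n - k))) ⟨(i : ℕ) - 1, hd⟩ := by rw [h2]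
          rw [apply_sum, zero_apply] at h3
          simpa [configMatrix, Matrix.mulVec, dotProduct, hi', hd, mul_comm] using h3
        · simp [configMatrix, Matrix.mulVec, dotProduct, hi', hd]
  -- value of T
  have Tv : ∀ v : Fin n → ℝ,
      (Tmat x).mulVec v = Fin.cons (∑ j, -(‖x j‖ ^ 2) * v j) v := by
    intro v
    funext i
    refine Fin.cases ?_ ?_ i
    · simp [Tmat, Matrix.mulVec, dotProduct]
    · intro i'
      simp [Tmat, Matrix.mulVec, dotProduct]
  -- characterization of Ker A on cons vectors
  have kerA : ∀ (a : ℝ) (v : Fin n → ℝ),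
      (cayleyMenger x).mulVec (Fin.cons a v) = 0 ↔
        (∑ j, v j = 0) ∧ ∀ i : Fin n, a + ∑ j, dist (x i) (x j) ^ 2 * v j = 0 := by
    intro a v
    constructor
    · intro h
      refine ⟨?_, fun i => ?_⟩
      · have h0 := congrFun h 0
        simpa [cayleyMenger, Matrix.mulVec, dotProduct, Fin.sum_univ_succ] using h0
      · have hi := congrFun h i.succ
        simpa [cayleyMenger, Matrix.mulVec, dotProduct, Fin.sum_univ_succ] using hi
    · rintro ⟨h1, h2⟩
      funext i
      refine Fin.cases ?_ ?_ i
      · simpa [cayleyMenger, Matrix.mulVec, dotProduct, Fin.sum_univ_succ] using h1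
      · intro i'
        simpa [cayleyMenger, Matrix.mulVec, dotProduct, Fin.sum_univ_succ] using h2 i'
  -- expansion of the distance row
  have key : ∀ (i : Fin n) (v : Fin n → ℝ),
      ∑ j, dist (x i) (x j) ^ 2 * v j =
        ‖x i‖ ^ 2 * (∑ j, v j) - 2 * (∑ j, v j * ⟪x i, x j⟫) + ∑ j, ‖x j‖ ^ 2 * v j := by
    intro i v
    rw [Finset.mul_sum, Finset.mul_sum, ← Finset.sum_sub_distrib, ← Finset.sum_add_distrib]
    refine Finset.sum_congr rfl fun j _ => ?_
    rw [dist_eq_norm, norm_sub_sq_real]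
    ring
  have inn : ∀ (i : Fin n) (v : Fin n → ℝ),
      ∑ j, v j * ⟪x i, x j⟫ = ⟪x i, ∑ j, v j • x j⟫ := by
    intro i v
    rw [inner_sum]
    exact Finset.sum_congr rfl fun j _ => (real_inner_smul_right _ _ _).symm
  -- MapsTo
  have hmap : Set.MapsTo (Tmat x).mulVec
      (↑(LinearMap.ker (configMatrix x).mulVecLin) : Set (Fin n → ℝ))
      (↑(LinearMap.ker (cayleyMenger x).mulVecLin) : Set (Fin (n + 1) → ℝ)) := by
    intro v hv
    rw [SetLike.mem_coe, LinearMap.mem_ker, Matrix.mulVecLin_apply] at hv ⊢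
    rw [kerX] at hv
    obtain ⟨h1, h2⟩ := hv
    rw [Tv v, kerA]
    refine ⟨h1, fun i => ?_⟩
    have hz : ∑ j, v j * ⟪x i, x j⟫ = 0 := by rw [inn, h2, inner_zero_right]
    rw [key, h1, hz]
    have hneg : ∑ j, -(‖x j‖ ^ 2) * v j = -∑ j, ‖x j‖ ^ 2 * v j := by
      simp [neg_mul]
    rw [hneg]; ring
  -- injectivity
  have hinjT : Function.Injective (Tmat x).mulVec := by
    intro v w h
    funext i
    have := congrFun h i.succ
    rwa [Tv, Tv, Fin.cons_succ, Fin.cons_succ] at this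
  -- surjectivity
  have hsurj : Set.SurjOn (Tmat x).mulVec
      (↑(LinearMap.ker (configMatrix x).mulVecLin) : Set (Fin n → ℝ))
      (↑(LinearMap.ker (cayleyMenger x).mulVecLin) : Set (Fin (n + 1) → ℝ)) := by
    intro w hw
    rw [SetLike.mem_coe, LinearMap.mem_ker, Matrix.mulVecLin_apply] at hw
    set v : Fin n → ℝ := Fin.tail w with hv
    have hw' : w = Fin.cons (w 0) v := (Fin.cons_self_tail w).symm
    rw [hw', kerA] at hw
    obtain ⟨h1, h2⟩ := hw
    set u := ∑ j, v j • x j with hu_def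
    set S3 := ∑ j, ‖x j‖ ^ 2 * v j with hS3
    have hinner : ∀ i : Fin n, ⟪x i, u⟫ = (w 0 + S3) / 2 := by
      intro i
      have h := h2 i
      rw [key, h1, inn] at h
      rw [← hu_def] at h
      linarith
    have hu : u = 0 := by
      have h4 : ⟪u, u⟫ = 0 := by
        have e1 : ⟪u, u⟫ = ∑ i, v i * ⟪x i, u⟫ := by
          conv_lhs => rw [hu_def]
          rw [sum_inner]
          exact Finset.sum_congr rfl fun i _ => real_inner_smul_left _ _ _
        rw [e1]
        have e2 : ∑ i, v i * ⟪x i, u⟫ = (∑ i, v i) * ((w 0 + S3) / 2) := by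
          rw [Finset.sum_mul]
          exact Finset.sum_congr rfl fun i _ => by rw [hinner]
        rw [e2, h1, zero_mul]
      exact inner_self_eq_zero.mp h4
    have hw0 : w 0 = -S3 := by
      have := hinner ⟨0, hn⟩
      rw [hu, inner_zero_right] at this
      linarith
    refine ⟨v, ?_, ?_⟩
    · rw [SetLike.mem_coe, LinearMap.mem_ker, Matrix.mulVecLin_apply, kerX]
      exact ⟨h1, hu⟩
    · rw [Tv]
      conv_rhs => rw [hw']
      congr 1
      rw [hw0, hS3]
      simp [neg_mul]
  have hbij : Set.BijOn (Tmat x).mulVec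
      (↑(LinearMap.ker (configMatrix x).mulVecLin) : Set (Fin n → ℝ))
      (↑(LinearMap.ker (cayleyMenger x).mulVecLin) : Set (Fin (n + 1) → ℝ)) :=
    ⟨hmap, hinjT.injOn, hsurj⟩
  refine ⟨hbij, ?_⟩
  let f : LinearMap.ker (configMatrix x).mulVecLin →ₗ[ℝ]
      LinearMap.ker (cayleyMenger x).mulVecLin :=
    LinearMap.codRestrict _
      ((Tmat x).mulVecLin.comp (LinearMap.ker (configMatrix x).mulVecLin).subtype)
      (fun c => hmap c.2)
  refine ⟨LinearEquiv.ofBijective f ⟨?_, ?_⟩⟩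
  · intro a b hab
    apply Subtype.ext
    apply hinjT
    exact congrArg Subtype.val hab
  · intro w
    obtain ⟨v, hv, hvw⟩ := hsurj w.2
    exact ⟨⟨v, hv⟩, Subtype.ext hvw⟩
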